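/- Let V be a nonnegative random variable with E[√V] < ∞ and P(V = 0) < 1. Suppose σ : (0, τ₀) → [0,∞) satisfies Φ(σ(τ)·√τ/2) = E[Φ(√(V·τ)/2)] for all τ ∈ (0, τ₀) (this is exactly the at-the-money implied volatility equation BS(0, σ(τ)², τ) = E[BS(0, V, τ)]). Then lim_{τ→0⁺} σ(τ) = E[√V]. -/

import Mathlib

open MeasureTheory Real

/-- The standard normal cumulative distribution function. -/
noncomputable def Phi (x : ℝ) : ℝ :=
  ∫ s in Set.Iic x, Real.exp (-(s ^ 2) / 2) / Real.sqrt (2 * Real.pi)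

lemma gauss_int : Integrable (fun s : ℝ => Real.exp (-(s ^ 2) / 2) / Real.sqrt (2 * Real.pi)) := by
  have h : Integrable (fun s : ℝ => Real.exp (-(1/2 : ℝ) * s ^ 2)) := integrable_exp_neg_mul_sq (by norm_num)
  have := h.div_const (Real.sqrt (2 * Real.pi))
  convert this using 2 with s
  ring_nf

lemma gauss_total : ∫ s : ℝ, Real.exp (-(s ^ 2) / 2) / Real.sqrt (2 * Real.pi) = 1 := by
  have h : ∫ s : ℝ, Real.exp (-(1/2 : ℝ) * s ^ 2) = Real.sqrt (Real.pi / (1/2)) :=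
    integral_gaussian (1/2)
  have h2 : ∫ s : ℝ, Real.exp (-(s ^ 2) / 2) = Real.sqrt (2 * Real.pi) := by
    rw [show (2 : ℝ) * Real.pi = Real.pi / (1/2) by ring, ← h]
    congr 1 with s; ring_nf
  have hc : (0:ℝ) < Real.sqrt (2 * Real.pi) := Real.sqrt_pos.2 (by positivity)
  rw [integral_div, h2, div_self hc.ne']

lemma Phi_zero : Phi 0 = 1/2 := by
  set f := fun s : ℝ => Real.exp (-(s ^ 2) / 2) / Real.sqrt (2 * Real.pi) with hf
  have heq : (fun s : ℝ => f (-s)) = f := by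
    funext s; rw [hf]; norm_num
  have h1 : ∫ s in Set.Iic (0:ℝ), f s = ∫ s in Set.Ioi (0:ℝ), f s := by
    conv_lhs => rw [← heq]
    rw [integral_comp_neg_Iic (0:ℝ) f, neg_zero]
  have h2 : (∫ s in Set.Iic (0:ℝ), f s) + ∫ s in Set.Ioi (0:ℝ), f s = ∫ s : ℝ, f s := by
    rw [← setIntegral_union (by simp [Set.disjoint_left]) measurableSet_Ioi
      gauss_int.integrableOn gauss_int.integrableOn, Set.Iic_union_Ioi,
      setIntegral_univ]
  have h3 := gauss_total
  show (∫ s in Set.Iic (0:ℝ), f s) = 1/2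
  rw [← hf] at h3
  rw [h3] at h2
  linarith [h1]

lemma Phi_sub_Phi (a b : ℝ) : Phi b - Phi a
    = ∫ s in a..b, Real.exp (-(s ^ 2) / 2) / Real.sqrt (2 * Real.pi) :=
  intervalIntegral.integral_Iic_sub_Iic gauss_int.integrableOn gauss_int.integrableOn

lemma Phi_mono : Monotone Phi := by
  intro a b hab
  have h := Phi_sub_Phi a b
  have hpos : 0 ≤ ∫ s in a..b, Real.exp (-(s ^ 2) / 2) / Real.sqrt (2 * Real.pi) :=
    intervalIntegral.integral_nonneg hab (fun s _ => by positivity)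
  linarith

lemma gauss_cont : Continuous (fun s : ℝ => Real.exp (-(s ^ 2) / 2) / Real.sqrt (2 * Real.pi)) := by
  fun_prop

lemma Phi_le (x : ℝ) (hx : 0 ≤ x) : Phi x - 1/2 ≤ x / Real.sqrt (2 * Real.pi) := by
  have h := Phi_sub_Phi 0 x
  rw [Phi_zero] at h
  have hb : ∫ s in (0:ℝ)..x, Real.exp (-(s ^ 2) / 2) / Real.sqrt (2 * Real.pi)
      ≤ ∫ s in (0:ℝ)..x, 1 / Real.sqrt (2 * Real.pi) := by
    apply intervalIntegral.integral_mono_on hx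
      (gauss_cont.intervalIntegrable 0 x) (intervalIntegrable_const)
    intro s _
    gcongr
    have : -(s^2)/2 ≤ 0 := by nlinarith [sq_nonneg s]
    calc Real.exp (-(s ^ 2) / 2) ≤ Real.exp 0 := Real.exp_le_exp.2 this
    _ = 1 := Real.exp_zero
  rw [intervalIntegral.integral_const] at hb
  simp only [smul_eq_mul, sub_zero] at hb
  linarith [h, hb, mul_one_div x (Real.sqrt (2 * Real.pi))]

lemma Phi_ge (x : ℝ) (hx : 0 ≤ x) :
    x * Real.exp (-(x ^ 2) / 2) / Real.sqrt (2 * Real.pi) ≤ Phi x - 1/2 := by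
  have h := Phi_sub_Phi 0 x
  rw [Phi_zero] at h
  have hb : ∫ s in (0:ℝ)..x, Real.exp (-(x ^ 2) / 2) / Real.sqrt (2 * Real.pi)
      ≤ ∫ s in (0:ℝ)..x, Real.exp (-(s ^ 2) / 2) / Real.sqrt (2 * Real.pi) := by
    apply intervalIntegral.integral_mono_on hx intervalIntegrable_const
      (gauss_cont.intervalIntegrable 0 x)
    intro s hs
    have h1 : s ^ 2 ≤ x ^ 2 := sq_le_sq' (by linarith [hs.1]) hs.2
    have h2 : -(x^2)/2 ≤ -(s^2)/2 := by linarith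
    have hc : (0:ℝ) < Real.sqrt (2 * Real.pi) := Real.sqrt_pos.2 (by positivity)
    exact div_le_div_of_nonneg_right (Real.exp_le_exp.2 h2) hc.le |>.trans_eq rfl
  rw [intervalIntegral.integral_const] at hb
  simp only [smul_eq_mul, sub_zero] at hb
  have : x * (Real.exp (-(x ^ 2) / 2) / Real.sqrt (2 * Real.pi))
      = x * Real.exp (-(x ^ 2) / 2) / Real.sqrt (2 * Real.pi) := by ring
  linarith [h, hb]

lemma Phi_nonneg (x : ℝ) : 0 ≤ Phi x :=
  setIntegral_nonneg measurableSet_Iic (fun s _ => by positivity)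

lemma Phi_le_one (x : ℝ) : Phi x ≤ 1 := by
  rw [← gauss_total]
  exact setIntegral_le_integral gauss_int (Filter.Eventually.of_forall (fun s => by positivity))

theorem stmt_15 {Ω : Type*} [MeasurableSpace Ω] (μ : Measure Ω) [IsProbabilityMeasure μ]
    (V : Ω → ℝ) (hV : Measurable V) (hVnn : ∀ ω, 0 ≤ V ω)
    (hint : Integrable (fun ω => Real.sqrt (V ω)) μ)
    (hmass : μ {ω | V ω = 0} < 1)
    (τ₀ : ℝ) (hτ₀ : 0 < τ₀) (σ : ℝ → ℝ)
    (hσ : ∀ τ ∈ Set.Ioo (0 : ℝ) τ₀, 0 ≤ σ τ ∧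
      Phi (σ τ * Real.sqrt τ / 2) = ∫ ω, Phi (Real.sqrt (V ω * τ) / 2) ∂μ) :
    Filter.Tendsto σ (nhdsWithin 0 (Set.Ioi 0)) (nhds (∫ ω, Real.sqrt (V ω) ∂μ)) := by
  have hc : (0:ℝ) < Real.sqrt (2*Real.pi) := Real.sqrt_pos.2 (by positivity)
  set c := Real.sqrt (2*Real.pi) with hcdef
  set I := ∫ ω, Real.sqrt (V ω) ∂μ with hI
  set F := nhdsWithin (0:ℝ) (Set.Ioi 0) with hF
  have hIoo : Set.Ioo (0:ℝ) τ₀ ∈ F := Ioo_mem_nhdsGT_of_mem ⟨le_refl 0, hτ₀⟩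
  -- I > 0
  have hInn : 0 ≤ I := integral_nonneg (fun ω => Real.sqrt_nonneg _)
  have hIpos : 0 < I := by
    rcases hInn.lt_or_eq with h | h
    · exact h
    exfalso
    have h0 : (fun ω => Real.sqrt (V ω)) =ᵐ[μ] 0 :=
      (integral_eq_zero_iff_of_nonneg (fun ω => Real.sqrt_nonneg _) hint).1 h.symm
    have hae : ∀ᵐ ω ∂μ, V ω = 0 := by
      filter_upwards [h0] with ω hω
      exact (Real.sqrt_eq_zero (hVnn ω)).1 hω
    have hs : MeasurableSet {ω | V ω = 0} := hV (measurableSet_singleton 0)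
    have h0' : μ {ω | V ω = 0}ᶜ = 0 := by
      have := ae_iff.1 hae
      simpa [Set.compl_setOf] using this
    have hcompl := measure_compl hs (measure_ne_top μ _)
    rw [measure_univ, h0'] at hcompl
    have h1le : (1:ENNReal) ≤ μ {ω | V ω = 0} := by
      rwa [eq_comm, tsub_eq_zero_iff_le] at hcompl
    have hm : μ {ω | V ω = 0} = 1 := le_antisymm prob_le_one h1le
    exact absurd hmass (by simp [hm])
  -- the lower comparison function
  set L := fun τ : ℝ => ∫ ω, Real.sqrt (V ω) * Real.exp (-(V ω * τ)/8) ∂μ with hL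
  -- key estimates
  have key : ∀ τ ∈ Set.Ioo (0:ℝ) τ₀,
      Real.sqrt τ / (2*c) * L τ ≤ Phi (σ τ * Real.sqrt τ / 2) - 1/2 ∧
      Phi (σ τ * Real.sqrt τ / 2) - 1/2 ≤ Real.sqrt τ / (2*c) * I := by
    intro τ hτ
    obtain ⟨hτ1, hτ2⟩ := hτ
    have heq := (hσ τ ⟨hτ1, hτ2⟩).2
    set A := fun ω => Real.sqrt (V ω * τ) / 2 with hA
    have hAnn : ∀ ω, 0 ≤ A ω := fun ω => by positivity
    have Aeq : ∀ ω, A ω = Real.sqrt (V ω) * Real.sqrt τ / 2 := fun ω => by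
      rw [hA]; simp only []; rw [Real.sqrt_mul (hVnn ω)]
    have m_A : Measurable A := (Real.continuous_sqrt.measurable.comp (hV.mul_const τ)).div_const 2
    have mPhiA : Measurable fun ω => Phi (A ω) := Phi_mono.measurable.comp m_A
    have intPhiA : Integrable (fun ω => Phi (A ω)) μ := by
      refine (integrable_const (1:ℝ)).mono' mPhiA.aestronglyMeasurable
        (Filter.Eventually.of_forall fun ω => ?_)
      rw [Real.norm_eq_abs, abs_le]
      exact ⟨by linarith [Phi_nonneg (A ω)], Phi_le_one _⟩
    have hPhiInt : Phi (σ τ * Real.sqrt τ / 2) - 1/2 = ∫ ω, (Phi (A ω) - 1/2) ∂μ := by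
      rw [integral_sub intPhiA (integrable_const _), integral_const, probReal_univ,
        one_smul, ← heq]
    have hint_exp : Integrable (fun ω => Real.sqrt (V ω) * Real.exp (-(V ω * τ)/8)) μ := by
      refine hint.mono'
        ((by fun_prop : Measurable fun ω => Real.sqrt (V ω) * Real.exp (-(V ω * τ)/8))).aestronglyMeasurable
        (Filter.Eventually.of_forall fun ω => ?_)
      rw [Real.norm_eq_abs, abs_of_nonneg (by positivity)]
      have hVτ : 0 ≤ V ω * τ := mul_nonneg (hVnn ω) hτ1.le
      have : Real.exp (-(V ω * τ)/8) ≤ 1 := Real.exp_le_one_iff.2 (by linarith)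
      exact mul_le_of_le_one_right (Real.sqrt_nonneg _) this
    constructor
    · -- lower bound
      have hpt : ∀ ω, Real.sqrt (V ω) * Real.exp (-(V ω * τ)/8) * (Real.sqrt τ / (2*c))
          ≤ Phi (A ω) - 1/2 := by
        intro ω
        have hA2 : A ω ^ 2 = V ω * τ / 4 := by
          rw [hA]; simp only []
          rw [div_pow, Real.sq_sqrt (mul_nonneg (hVnn ω) hτ1.le)]
          norm_num
        have h' : A ω * Real.exp (-(A ω ^ 2) / 2) / c ≤ Phi (A ω) - 1/2 :=
          Phi_ge (A ω) (hAnn ω)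
        have hexp : -(A ω ^ 2) / 2 = -(V ω * τ)/8 := by rw [hA2]; ring
        rw [hexp] at h'
        refine le_trans (le_of_eq ?_) h'
        rw [Aeq ω]; ring
      rw [hPhiInt]
      calc Real.sqrt τ / (2*c) * L τ
          = ∫ ω, Real.sqrt (V ω) * Real.exp (-(V ω * τ)/8) * (Real.sqrt τ / (2*c)) ∂μ := by
            rw [integral_mul_const]; ring
        _ ≤ ∫ ω, (Phi (A ω) - 1/2) ∂μ :=
            integral_mono (hint_exp.mul_const _) (intPhiA.sub (integrable_const _)) hpt
    · -- upper bound
      have hpt : ∀ ω, Phi (A ω) - 1/2 ≤ Real.sqrt (V ω) * (Real.sqrt τ / (2*c)) := by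
        intro ω
        refine (Phi_le (A ω) (hAnn ω)).trans (le_of_eq ?_)
        rw [Aeq ω]; ring
      rw [hPhiInt]
      calc ∫ ω, (Phi (A ω) - 1/2) ∂μ
          ≤ ∫ ω, Real.sqrt (V ω) * (Real.sqrt τ / (2*c)) ∂μ :=
            integral_mono (intPhiA.sub (integrable_const _)) (hint.mul_const _) hpt
        _ = Real.sqrt τ / (2*c) * I := by rw [integral_mul_const, ← hI]; ring
  -- step 2: s τ := σ τ * √τ / 2 → 0
  have hs0 : Filter.Tendsto (fun τ => σ τ * Real.sqrt τ / 2) F (nhds 0) := by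
    rw [tendsto_order]
    constructor
    · intro b hb
      filter_upwards [hIoo] with τ hτ
      have := (hσ τ hτ).1
      have : 0 ≤ σ τ * Real.sqrt τ / 2 := by positivity
      linarith
    · intro b hb
      have hε : 0 < Phi b - 1/2 := by
        have h1 := Phi_ge b hb.le
        have : 0 < b * Real.exp (-(b ^ 2) / 2) / c := by positivity
        linarith
      have t1 : Filter.Tendsto (fun τ:ℝ => Real.sqrt τ / (2*c) * I) F (nhds 0) := by
        have hcont : Continuous (fun τ:ℝ => Real.sqrt τ / (2*c) * I) := by
          exact (Real.continuous_sqrt.div_const _).mul continuous_const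
        have := (hcont.tendsto 0).mono_left (nhdsWithin_le_nhds (s := Set.Ioi (0:ℝ)))
        simpa using this
      have t2 : ∀ᶠ τ in F, Real.sqrt τ / (2*c) * I < Phi b - 1/2 :=
        t1.eventually_lt_const hε
      filter_upwards [hIoo, t2] with τ hτ ht2
      by_contra hcon
      push_neg at hcon
      have := Phi_mono hcon
      have hkey := (key τ hτ).2
      linarith
  -- step 4: upper function tends to I
  have hU : Filter.Tendsto (fun τ => Real.exp ((σ τ * Real.sqrt τ / 2)^2/2) * I) F (nhds I) := by
    have h1 : Filter.Tendsto (fun τ => (σ τ * Real.sqrt τ / 2)^2/2) F (nhds 0) := by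
      have := (hs0.mul hs0).div_const 2
      simp only [mul_zero, zero_div] at this
      convert this using 2 with τ
      ring
    have := ((Real.continuous_exp.tendsto 0).comp h1).mul_const I
    simpa using this
  -- step 6: lower function tends to I
  have hLt : Filter.Tendsto L F (nhds I) := by
    rw [hL, hI]
    refine tendsto_integral_filter_of_dominated_convergence (fun ω => Real.sqrt (V ω))
      (Filter.Eventually.of_forall fun τ => ?_) ?_ hint ?_
    · exact ((by fun_prop : Measurable fun ω => Real.sqrt (V ω) * Real.exp (-(V ω * τ)/8))).aestronglyMeasurable
    · filter_upwards [self_mem_nhdsWithin] with τ hτ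
      refine Filter.Eventually.of_forall fun ω => ?_
      rw [Real.norm_eq_abs, abs_of_nonneg (by positivity)]
      have hVτ : 0 ≤ V ω * τ := mul_nonneg (hVnn ω) (le_of_lt hτ)
      exact mul_le_of_le_one_right (Real.sqrt_nonneg _)
        (Real.exp_le_one_iff.2 (by linarith))
    · refine Filter.Eventually.of_forall fun ω => ?_
      have hcont : Continuous (fun τ:ℝ => Real.sqrt (V ω) * Real.exp (-(V ω * τ)/8)) := by
        fun_prop
      have := (hcont.tendsto 0).mono_left (nhdsWithin_le_nhds (s := Set.Ioi (0:ℝ)))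
      simpa using this
  -- step 3 & 5: eventual bounds on σ
  have hbound : ∀ᶠ τ in F, L τ ≤ σ τ ∧ σ τ ≤ Real.exp ((σ τ * Real.sqrt τ / 2)^2/2) * I := by
    filter_upwards [hIoo] with τ hτ
    have hτ1 := hτ.1
    have hτs : 0 < Real.sqrt τ := Real.sqrt_pos.2 hτ1
    have hσnn := (hσ τ hτ).1
    have hsnn : 0 ≤ σ τ * Real.sqrt τ / 2 := by positivity
    obtain ⟨klo, kup⟩ := key τ hτ
    constructor
    · -- L τ ≤ σ τ
      have h1 : Phi (σ τ * Real.sqrt τ / 2) - 1/2 ≤ (σ τ * Real.sqrt τ / 2) / c :=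
        Phi_le _ hsnn
      have h2 : Real.sqrt τ / (2*c) * L τ ≤ (σ τ * Real.sqrt τ / 2) / c := le_trans klo h1
      have h3 : Real.sqrt τ / (2*c) * L τ = Real.sqrt τ / (2*c) * L τ := rfl
      -- multiply both sides by 2c/√τ
      have h4 : (σ τ * Real.sqrt τ / 2) / c = Real.sqrt τ / (2*c) * σ τ := by
        field_simp
      rw [h4] at h2
      have hpos : 0 < Real.sqrt τ / (2*c) := by positivity
      exact le_of_mul_le_mul_left h2 hpos
    · -- σ τ ≤ exp(s²/2) I
      set u := (σ τ * Real.sqrt τ / 2)^2/2 with hu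
      have h1 : (σ τ * Real.sqrt τ / 2) * Real.exp (-(σ τ * Real.sqrt τ / 2)^2/2) / c
          ≤ Phi (σ τ * Real.sqrt τ / 2) - 1/2 := by
        exact Phi_ge (σ τ * Real.sqrt τ / 2) hsnn
      have h2 : (σ τ * Real.sqrt τ / 2) * Real.exp (-u) / c ≤ Real.sqrt τ / (2*c) * I := by
        rw [hu]
        refine le_trans (le_of_eq ?_) (le_trans h1 kup)
        congr 2
        ring
      have h3 : Real.sqrt τ / (2*c) * (σ τ * Real.exp (-u)) = (σ τ * Real.sqrt τ / 2) * Real.exp (-u) / c := by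
        field_simp
      rw [← h3] at h2
      have hpos : 0 < Real.sqrt τ / (2*c) := by positivity
      have h5 : σ τ * Real.exp (-u) ≤ I := le_of_mul_le_mul_left h2 hpos
      have h6 := mul_le_mul_of_nonneg_right h5 (Real.exp_pos u).le
      rw [mul_assoc, ← Real.exp_add, neg_add_cancel, Real.exp_zero, mul_one] at h6
      linarith [h6]
  -- squeeze
  refine tendsto_of_tendsto_of_tendsto_of_le_of_le' hLt hU ?_ ?_
  · filter_upwards [hbound] with τ h using h.1
  · filter_upwards [hbound] with τ h using h.2
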